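/- There is a constant C such that for every bipartite graph G = (X,Y;E) with Δ(X) ≤ 4, one has χ'_int(G,X) ≤ C·(Δ(G))². -/
import Mathlib


/-- `X` is one part of a bipartition of `G`: every edge joins `X` and its complement. -/
def IsBipartition {V : Type*} (G : SimpleGraph V) (X : Set V) : Prop :=
  ∀ v w, G.Adj v w → (v ∈ X ↔ w ∉ X)

/-- A proper edge coloring: distinct edges sharing a vertex get distinct colors. -/
def IsProperEdgeColoring {V : Type*} (G : SimpleGraph V) (c : G.edgeSet → ℕ) : Prop :=
  ∀ e f : G.edgeSet, e ≠ f → (∃ v, v ∈ (e : Sym2 V) ∧ v ∈ (f : Sym2 V)) → c e ≠ c f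

/-- The palette of a vertex: the set of colors on its incident edges. -/
def palette {V : Type*} (G : SimpleGraph V) (c : G.edgeSet → ℕ) (v : V) : Set ℕ :=
  {n | ∃ e : G.edgeSet, v ∈ (e : Sym2 V) ∧ c e = n}

/-- The coloring is interval at `v`: the palette of `v` is a set of consecutive integers. -/
def IntervalAt {V : Type*} (G : SimpleGraph V) (c : G.edgeSet → ℕ) (v : V) : Prop :=
  ∀ a b m : ℕ, a ∈ palette G c v → b ∈ palette G c v → a ≤ m → m ≤ b →
    m ∈ palette G c v

/-- There is a constant `C` such that every bipartite graph `G = (X, Y; E)` with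
`Δ(X) ≤ 4` satisfies `χ'_int(G, X) ≤ C * Δ(G)²`: it has an `X`-interval coloring using
at most `C * Δ(G)²` colors. -/
lemma greedy_coloring {V : Type*} [Fintype V] [DecidableEq V] (H : SimpleGraph V)
    [DecidableRel H.Adj] (n : ℕ) (hd : ∀ v, H.degree v < n) :
    ∃ b : V → ℕ, (∀ v, b v < n) ∧ ∀ v w, H.Adj v w → b v ≠ b w := by
  have key : ∀ s : Finset V, ∃ b : V → ℕ, (∀ v, b v < n) ∧
      ∀ v w, v ∈ s → w ∈ s → H.Adj v w → b v ≠ b w := by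
    intro s
    induction s using Finset.induction with
    | empty =>
      exact ⟨fun _ => 0, fun v => lt_of_le_of_lt (Nat.zero_le _) (hd v), by simp⟩
    | @insert a s ha ih =>
      obtain ⟨b, hb, hbadj⟩ := ih
      set used := (s.filter (H.Adj a)).image b with hused
      have hcard : used.card < n := by
        calc used.card ≤ (s.filter (H.Adj a)).card := Finset.card_image_le
          _ ≤ (H.neighborFinset a).card := by
              apply Finset.card_le_card
              intro w hw
              rw [Finset.mem_filter] at hw
              rw [SimpleGraph.mem_neighborFinset]
              exact hw.2
          _ < n := hd a
      have hns : ¬ (Finset.range n ⊆ used) := by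
        intro h
        have := Finset.card_le_card h
        simp at this
        omega
      obtain ⟨k, hkr, hku⟩ := Finset.not_subset.mp hns
      rw [Finset.mem_range] at hkr
      refine ⟨Function.update b a k, ?_, ?_⟩
      · intro v
        by_cases hv : v = a
        · subst hv; simp [hkr]
        · simp [Function.update_of_ne hv, hb v]
      · intro v w hv hw hadj
        rcases Finset.mem_insert.mp hv with hv | hv <;>
          rcases Finset.mem_insert.mp hw with hw | hw
        · exact absurd (hv.trans hw.symm) (H.ne_of_adj hadj)
        · have hwa : w ≠ a := fun h => ha (h ▸ hw)
          rw [hv]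
          simp only [Function.update_self, Function.update_of_ne hwa]
          intro h
          exact hku (h ▸ Finset.mem_image.mpr ⟨w, Finset.mem_filter.mpr ⟨hw, hv ▸ hadj⟩, rfl⟩)
        · have hva : v ≠ a := fun h => ha (h ▸ hv)
          rw [hw]
          simp only [Function.update_self, Function.update_of_ne hva]
          intro h
          exact hku (h.symm ▸ Finset.mem_image.mpr ⟨v, Finset.mem_filter.mpr ⟨hv, hw ▸ hadj.symm⟩, rfl⟩)
        · have hva : v ≠ a := fun h => ha (h ▸ hv)
          have hwa : w ≠ a := fun h => ha (h ▸ hw)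
          simp only [Function.update_of_ne hva, Function.update_of_ne hwa]
          exact hbadj v w hv hw hadj
  obtain ⟨b, hb, hbadj⟩ := key Finset.univ
  exact ⟨b, hb, fun v w h => hbadj v w (Finset.mem_univ v) (Finset.mem_univ w) h⟩


theorem X_interval_quadratic_bound_of_maxDegX_le_four :
    ∃ C : ℕ, ∀ (V : Type) [Fintype V] [DecidableEq V]
      (G : SimpleGraph V) [DecidableRel G.Adj] (X : Set V),
      IsBipartition G X →
      (∀ x ∈ X, G.degree x ≤ 4) →
      ∃ c : G.edgeSet → ℕ, IsProperEdgeColoring G c ∧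
        (∀ e, c e < C * G.maxDegree ^ 2) ∧
        ∀ x ∈ X, IntervalAt G c x := by
  classical
  refine ⟨25, ?_⟩
  intro V _ _ G _ X hbip hdeg4
  set Δ := G.maxDegree with hΔdef
  -- conflict graph on X-side vertices
  let H : SimpleGraph V := SimpleGraph.fromRel (fun v w => ∃ y, G.Adj v y ∧ G.Adj w y)
  haveI : DecidableRel H.Adj := fun v w => Classical.dec _
  have hHadj : ∀ v w, H.Adj v w ↔ v ≠ w ∧ ∃ y, G.Adj v y ∧ G.Adj w y := by
    intro v w
    constructor
    · rintro ⟨hne, ⟨y, h1, h2⟩ | ⟨y, h1, h2⟩⟩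
      · exact ⟨hne, y, h1, h2⟩
      · exact ⟨hne, y, h2, h1⟩
    · rintro ⟨hne, y, h1, h2⟩
      exact ⟨hne, Or.inl ⟨y, h1, h2⟩⟩
  have hHdeg : ∀ v, H.degree v < 4 * Δ + 1 := by
    intro v
    have hsub : H.neighborFinset v ⊆
        (G.neighborFinset v).biUnion (fun y => G.neighborFinset y) := by
      intro w hw
      rw [SimpleGraph.mem_neighborFinset] at hw
      obtain ⟨_, y, h1, h2⟩ := (hHadj v w).mp hw
      exact Finset.mem_biUnion.mpr ⟨y, (SimpleGraph.mem_neighborFinset _ _ _).mpr h1,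
        (SimpleGraph.mem_neighborFinset _ _ _).mpr h2.symm⟩
    have hb : H.degree v ≤ ∑ y ∈ G.neighborFinset v, (G.neighborFinset y).card :=
      le_trans (Finset.card_le_card hsub) Finset.card_biUnion_le
    have hfin : ∑ y ∈ G.neighborFinset v, (G.neighborFinset y).card ≤ 4 * Δ := by
      by_cases hv : v ∈ X
      · calc ∑ y ∈ G.neighborFinset v, (G.neighborFinset y).card
            ≤ (G.neighborFinset v).card * Δ := by
              apply Finset.sum_le_card_nsmul
              intro y _
              exact G.degree_le_maxDegree y
          _ ≤ 4 * Δ := Nat.mul_le_mul_right Δ (hdeg4 v hv)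
      · calc ∑ y ∈ G.neighborFinset v, (G.neighborFinset y).card
            ≤ (G.neighborFinset v).card * 4 := by
              apply Finset.sum_le_card_nsmul
              intro y hy
              rw [SimpleGraph.mem_neighborFinset] at hy
              have hyX : y ∈ X := by
                by_contra hyn
                exact hv ((hbip v y hy).mpr hyn)
              exact hdeg4 y hyX
          _ ≤ Δ * 4 := Nat.mul_le_mul_right 4 (G.degree_le_maxDegree v)
          _ = 4 * Δ := Nat.mul_comm Δ 4
    omega
  obtain ⟨b, hb, hbadj⟩ := greedy_coloring H (4 * Δ + 1) hHdeg
  -- local enumeration of neighborhoods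
  let E : ∀ x : V, (G.neighborFinset x : Finset V) ≃ Fin (G.degree x) := fun x =>
    (Fintype.equivFin _).trans (finCongr (by rw [Fintype.card_coe]; rfl))
  let r : V → V → ℕ := fun x y =>
    if h : y ∈ G.neighborFinset x then (E x ⟨y, h⟩ : Fin _).val else 0
  let f : V → V → ℕ := fun v w =>
    if v ∈ X ∧ w ∉ X then 5 * b v + r v w
    else if w ∈ X ∧ v ∉ X then 5 * b w + r w v else 0
  have hfsymm : ∀ v w, f v w = f w v := by
    intro v w
    by_cases hv : v ∈ X <;> by_cases hw : w ∈ X <;> simp [f, hv, hw]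
  let c : G.edgeSet → ℕ := fun e => Sym2.lift ⟨fun v w => f v w, hfsymm⟩ e.1
  have hr_lt : ∀ x y, G.Adj x y → r x y < G.degree x := by
    intro x y h
    have hm : y ∈ G.neighborFinset x := (SimpleGraph.mem_neighborFinset _ _ _).mpr h
    simp only [r, dif_pos hm]
    exact (E x ⟨y, hm⟩).isLt
  have hc : ∀ (x y : V), G.Adj x y → x ∈ X →
      Sym2.lift ⟨fun v w => f v w, hfsymm⟩ s(x, y) = 5 * b x + r x y := by
    intro x y h hx
    have hy : y ∉ X := (hbip x y h).mp hx
    simp [f, hx, hy]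
  have hrep : ∀ e : G.edgeSet, ∃ x y, x ∈ X ∧ G.Adj x y ∧ (e : Sym2 V) = s(x, y) := by
    rintro ⟨e, he⟩
    induction e using Sym2.ind with
    | _ u v =>
      have hadj : G.Adj u v := he
      by_cases hu : u ∈ X
      · exact ⟨u, v, hu, hadj, rfl⟩
      · have hv : v ∈ X := by
          by_contra hvn
          exact hu ((hbip u v hadj).mpr hvn)
        exact ⟨v, u, hv, hadj.symm, Sym2.eq_swap⟩
  have hce : ∀ (e : G.edgeSet) (x y : V), x ∈ X → G.Adj x y → (e : Sym2 V) = s(x, y) →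
      c e = 5 * b x + r x y := by
    intro e x y hx hadj heq
    show Sym2.lift ⟨fun v w => f v w, hfsymm⟩ e.1 = _
    rw [heq, hc x y hadj hx]
  refine ⟨c, ?_, ?_, ?_⟩
  · -- proper
    intro e e' hne ⟨v, hve, hve'⟩ hcc
    obtain ⟨x1, y1, hx1, hadj1, heq1⟩ := hrep e
    obtain ⟨x2, y2, hx2, hadj2, heq2⟩ := hrep e'
    have hy1 : y1 ∉ X := (hbip x1 y1 hadj1).mp hx1
    have hy2 : y2 ∉ X := (hbip x2 y2 hadj2).mp hx2
    rw [hce e x1 y1 hx1 hadj1 heq1, hce e' x2 y2 hx2 hadj2 heq2] at hcc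
    have hr1 : r x1 y1 < 5 := lt_of_lt_of_le (hr_lt x1 y1 hadj1)
      (le_trans (hdeg4 x1 hx1) (by norm_num))
    have hr2 : r x2 y2 < 5 := lt_of_lt_of_le (hr_lt x2 y2 hadj2)
      (le_trans (hdeg4 x2 hx2) (by norm_num))
    have hbb : b x1 = b x2 ∧ r x1 y1 = r x2 y2 := by omega
    by_cases hxx : x1 = x2
    · -- same X-endpoint: enumeration injective forces same edge
      subst hxx
      have hm1 : y1 ∈ G.neighborFinset x1 := (SimpleGraph.mem_neighborFinset _ _ _).mpr hadj1
      have hm2 : y2 ∈ G.neighborFinset x1 := (SimpleGraph.mem_neighborFinset _ _ _).mpr hadj2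
      have hrr : r x1 y1 = r x1 y2 := hbb.2
      simp only [r, dif_pos hm1, dif_pos hm2] at hrr
      have : (⟨y1, hm1⟩ : (G.neighborFinset x1 : Finset V)) = ⟨y2, hm2⟩ :=
        (E x1).injective (Fin.ext hrr)
      have hy12 : y1 = y2 := congrArg Subtype.val this
      apply hne
      apply Subtype.ext
      rw [heq1, heq2, hy12]
    · -- different X-endpoints sharing a Y-vertex: blocks differ
      have h1 := Sym2.mem_iff.mp (heq1 ▸ hve)
      have h2 := Sym2.mem_iff.mp (heq2 ▸ hve')
      have hv1 : v = y1 := by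
        rcases h1 with h1 | h1
        · rcases h2 with h2 | h2
          · exact absurd (h1.symm.trans h2) hxx
          · exfalso; apply hy2; rw [← h2, h1]; exact hx1
        · exact h1
      have hv2 : v = y2 := by
        rcases h2 with h2 | h2
        · exfalso; apply hy1; rw [← hv1, h2]; exact hx2
        · exact h2
      have hH : H.Adj x1 x2 :=
        (hHadj x1 x2).mpr ⟨hxx, v, by rw [hv1]; exact hadj1, by rw [hv2]; exact hadj2⟩
      exact hbadj x1 x2 hH hbb.1
  · -- bound
    intro e
    obtain ⟨x, y, hx, hadj, heq⟩ := hrep e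
    rw [hce e x y hx hadj heq]
    have hd1 : 1 ≤ G.degree x := by
      rw [← SimpleGraph.card_neighborFinset_eq_degree]
      exact Finset.card_pos.mpr ⟨y, (SimpleGraph.mem_neighborFinset _ _ _).mpr hadj⟩
    have hΔ1 : 1 ≤ Δ := le_trans hd1 (G.degree_le_maxDegree x)
    have hr : r x y < 4 := lt_of_lt_of_le (hr_lt x y hadj) (hdeg4 x hx)
    have hbx : b x < 4 * Δ + 1 := hb x
    have hΔΔ : Δ ≤ Δ ^ 2 := by nlinarith
    have hsq : Δ ^ 2 = Δ * Δ := sq Δ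
    nlinarith [hb x, hr, hΔ1, hΔΔ]
  · -- interval at each x ∈ X
    intro x hx
    have hpal : ∀ n, n ∈ palette G c x ↔ ∃ j, j < G.degree x ∧ n = 5 * b x + j := by
      intro n
      constructor
      · rintro ⟨e, hxe, hcen⟩
        obtain ⟨y, hey⟩ := Sym2.mem_iff_exists.mp hxe
        have hadj : G.Adj x y := by
          have h2 := e.2
          rw [hey] at h2
          exact (SimpleGraph.mem_edgeSet G).mp h2
        refine ⟨r x y, hr_lt x y hadj, ?_⟩
        rw [← hcen, hce e x y hx hadj hey]
      · rintro ⟨j, hj, rfl⟩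
        set yy := (E x).symm ⟨j, hj⟩ with hyy
        have hm : (yy : V) ∈ G.neighborFinset x := yy.2
        have hadj : G.Adj x (yy : V) := (SimpleGraph.mem_neighborFinset _ _ _).mp hm
        refine ⟨⟨s(x, (yy : V)), (SimpleGraph.mem_edgeSet G).mpr hadj⟩,
          Sym2.mem_mk_left _ _, ?_⟩
        rw [hce _ x (yy : V) hx hadj rfl]
        congr 1
        simp only [r, dif_pos hm]
        have : (⟨(yy : V), hm⟩ : (G.neighborFinset x : Finset V)) = yy := Subtype.ext rfl
        rw [this, hyy, Equiv.apply_symm_apply]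
    intro a bb m ha hbb ham hmb
    obtain ⟨ja, hja, rfl⟩ := (hpal a).mp ha
    obtain ⟨jb, hjb, rfl⟩ := (hpal bb).mp hbb
    exact (hpal m).mpr ⟨m - 5 * b x, by omega, by omega⟩
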